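/- arXiv:2301.04079 — 3 statements merged into one kernel-verified Lean document; each statement's English description precedes it below -/
import Mathlib

section
/- Let C be an abelian category satisfying the minimal cover axiom. Then the category Ch(C) of non-negative chain complexes in C also satisfies the minimal cover axiom. Explicitly, for a chain complex X, the minimal projective cover of X in Ch(C) is isomorphic to the direct sum ⊕_{n≥0} D^n(P_n), where P_n is the minimal projective cover in C of coker(∂_{n+1} : X_{n+1} → X_n), and the covering map restricts in degree n to a lift of the minimal cover P_n → coker(∂_{n+1}) along the quotient X_n → coker(∂_{n+1}). -/
open CategoryTheory CategoryTheory.Limits ZeroObject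

universe v u

variable {C : Type u} [Category.{v} C] [Abelian C]

/-- `p : P ⟶ X` is a minimal projective cover. -/
def IsMinimalProjectiveCover {E : Type*} [Category E] {P X : E} (p : P ⟶ X) : Prop :=
  Projective P ∧ Epi p ∧ ∀ φ : P ⟶ P, φ ≫ p = p → IsIso φ

/-- A category satisfies the minimal cover axiom if every object admits a minimal
projective cover. -/
def HasMinimalCovers (E : Type*) [Category E] : Prop :=
  ∀ X : E, ∃ (P : E) (p : P ⟶ X), IsMinimalProjectiveCover p

/-- Degrees of the disk `D^n(A)`: `A` in degrees `n` and `n - 1`, and `0` elsewhere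
(for `n = 0`, `A` concentrated in degree `0`). -/
noncomputable def diskObj (n : ℕ) (A : C) : ℕ → C := fun i =>
  if i = n ∨ i + 1 = n then A else 0

/-- Differentials of the disk `D^n(A)`: the identity of `A` in degree `n`. -/
noncomputable def diskD (n : ℕ) (A : C) :
    ∀ k : ℕ, diskObj n A (k + 1) ⟶ diskObj n A k := fun k =>
  if h : k + 1 = n then
    eqToHom (if_pos (Or.inl h)) ≫ eqToHom (if_pos (Or.inr h)).symm
  else 0

/-- The disk `D^n(A)`: the chain complex equal to `A` in degrees `n` and `n − 1` with
`n`-th boundary the identity, and `0` elsewhere; `D^0(A)` is `A` concentrated in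
degree `0`. -/
noncomputable def disk (n : ℕ) (A : C) : ChainComplex C ℕ :=
  ChainComplex.of (diskObj n A) (diskD n A) (by
    intro k
    have h2 : ¬(k + 1 + 1 = n) ∨ ¬(k + 1 = n) := by omega
    rcases h2 with h2 | h2 <;> simp [diskD, h2])

/-- Degrees of the suspension of a chain complex. -/
noncomputable def suspObj (X : ChainComplex C ℕ) : ℕ → C
  | 0 => 0
  | n + 1 => X.X n

/-- Differentials of the suspension of a chain complex. -/
noncomputable def suspD (X : ChainComplex C ℕ) :
    ∀ k : ℕ, suspObj X (k + 1) ⟶ suspObj X k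
  | 0 => 0
  | k + 1 => X.d (k + 1) k

/-- The suspension `S(X)` of a non-negative chain complex `X`. -/
noncomputable def susp (X : ChainComplex C ℕ) : ChainComplex C ℕ :=
  ChainComplex.of (suspObj X) (suspD X) (by
    intro k
    match k with
    | 0 => exact comp_zero
    | k + 1 => exact X.d_comp_d _ _ _)

/-- The `n`-fold suspension `Sⁿ(X)` of a non-negative chain complex `X`. -/
noncomputable def suspN : ℕ → ChainComplex C ℕ → ChainComplex C ℕ
  | 0, X => X
  | n + 1, X => susp (suspN n X)

/-- Degrees of the chain complex with `P0` in degree `0` and `P1` in degree `1`. -/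
noncomputable def twoObj (P0 P1 : C) : ℕ → C
  | 0 => P0
  | 1 => P1
  | _ + 2 => 0

/-- Differentials of the chain complex with `P1 ⟶ P0` concentrated in degrees `1`, `0`. -/
noncomputable def twoD {P0 P1 : C} (d : P1 ⟶ P0) :
    ∀ k : ℕ, twoObj P0 P1 (k + 1) ⟶ twoObj P0 P1 k
  | 0 => d
  | _ + 1 => 0

/-- The chain complex concentrated in degrees `0` and `1`, given by a morphism
`d : P1 ⟶ P0`. -/
noncomputable def twoComplex {P0 P1 : C} (d : P1 ⟶ P0) : ChainComplex C ℕ :=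
  ChainComplex.of (twoObj P0 P1) (twoD d) (by
    intro k
    exact zero_comp)

/-- `IsMinimalLen1Resolution d p` expresses that `0 ⟶ P1 ⟶ P0 ⟶ A ⟶ 0` is a minimal
projective resolution of `A` of length at most 1: `d` is a monomorphism,
`p : P0 ⟶ A` is a minimal projective cover, and the induced morphism
`P1 ⟶ ker p` is a minimal projective cover. -/
def IsMinimalLen1Resolution {P1 P0 A : C} (d : P1 ⟶ P0) (p : P0 ⟶ A) : Prop :=
  Mono d ∧ ∃ w : d ≫ p = 0,
    IsMinimalProjectiveCover p ∧ IsMinimalProjectiveCover (kernel.lift p d w)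

/-- An object has projective dimension at most 1: it admits a projective resolution
`0 ⟶ P1 ⟶ P0 ⟶ A ⟶ 0` of length at most 1. -/
def ProjDimLE1 (A : C) : Prop :=
  ∃ (P1 P0 : C) (d : P1 ⟶ P0) (p : P0 ⟶ A) (w : d ≫ p = 0),
    Projective P1 ∧ Projective P0 ∧ Mono d ∧ Epi p ∧ (ShortComplex.mk d p w).Exact

/-- The direct sum `⊕_{n ≥ 0} Dⁿ(P n)` of disks: in degree `k` it equals `P k ⊕ P (k+1)`,
with differential sending the first summand of degree `k + 1` identically onto the second
summand of degree `k`. -/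
noncomputable def diskSum (P : ℕ → C) : ChainComplex C ℕ :=
  ChainComplex.of (fun k => P k ⊞ P (k + 1))
    (fun _ => biprod.fst ≫ biprod.inr) (by intro k; simp)


section Aux

variable {C : Type u} [Category.{v} C] [Abelian C]

/-- Constructor for chain maps of ℕ-indexed chain complexes. -/
noncomputable def mkChainHom {A B : ChainComplex C ℕ} (f : ∀ n, A.X n ⟶ B.X n)
    (h : ∀ n, A.d (n+1) n ≫ f n = f (n+1) ≫ B.d (n+1) n) : A ⟶ B where
  f := f
  comm' := by rintro i j (rfl : j + 1 = i); exact (h j).symm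

lemma ofComponents_id {X₁ X₂ : C} :
    Biprod.ofComponents (𝟙 X₁) (0 : X₁ ⟶ X₂) 0 (𝟙 X₂) = 𝟙 _ := by
  apply biprod.hom_ext' <;> simp [Biprod.inl_ofComponents, Biprod.inr_ofComponents]

lemma isIso_triangular {X₁ X₂ : C} (a : X₁ ⟶ X₁) (b : X₁ ⟶ X₂) (e : X₂ ⟶ X₂)
    (ha : IsIso a) (he : IsIso e) : IsIso (Biprod.ofComponents a b 0 e) := by
  refine ⟨Biprod.ofComponents (inv a) (-(inv a ≫ b ≫ inv e)) 0 (inv e), ?_, ?_⟩ <;>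
    rw [Biprod.ofComponents_comp] <;>
    simp [ofComponents_id]

lemma diskSum_d (P : ℕ → C) (k : ℕ) :
    (diskSum P).d (k + 1) k = biprod.fst ≫ biprod.inr :=
  ChainComplex.of_d (fun k => P k ⊞ P (k + 1)) (fun _ => biprod.fst ≫ biprod.inr) k

lemma diskSum_X (P : ℕ → C) (k : ℕ) : (diskSum P).X k = (P k ⊞ P (k + 1)) := rfl

lemma diskSum_projective (P : ℕ → C) (hP : ∀ n, Projective (P n)) :
    Projective (diskSum P) where
  factors {E X} f e he := by
    have hl : ∀ n, ∃ l : P n ⟶ E.X n, l ≫ e.f n = biprod.inl ≫ f.f n := fun n => by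
      have := hP n
      exact Projective.factors (biprod.inl ≫ f.f n) (e.f n)
    choose l hl using hl
    refine ⟨mkChainHom (fun n => biprod.desc (l n) (l (n+1) ≫ E.d (n+1) n)) ?_, ?_⟩
    · intro n
      rw [diskSum_d]
      apply biprod.hom_ext' <;> dsimp only [diskSum_X] <;> simp
    · ext n
      show biprod.desc (l n) (l (n+1) ≫ E.d (n+1) n) ≫ e.f n = f.f n
      apply biprod.hom_ext'
      · simpa using hl n
      · have h1 : E.d (n+1) n ≫ e.f n = e.f (n+1) ≫ X.d (n+1) n := (e.comm _ _).symm
        have h2 : f.f (n+1) ≫ X.d (n+1) n = (diskSum P).d (n+1) n ≫ f.f n := f.comm _ _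
        rw [biprod.inr_desc_assoc, Category.assoc, h1, reassoc_of% (hl (n+1))]
        erw [Category.assoc, h2]
        rw [diskSum_d]
        erw [Category.assoc, biprod.inl_fst_assoc]
        rfl
    
lemma exists_minimal_cover_chain (X : ChainComplex C ℕ) (P : ℕ → C)
    (c : ∀ n : ℕ, P n ⟶ cokernel (X.d (n + 1) n))
    (hc : ∀ n : ℕ, IsMinimalProjectiveCover (c n))
    (s : ∀ n : ℕ, P n ⟶ X.X n)
    (hs : ∀ n : ℕ, s n ≫ cokernel.π (X.d (n + 1) n) = c n) :
    ∃ α : diskSum P ⟶ X,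
      (∀ k : ℕ, α.f k = biprod.desc (s k) (s (k + 1) ≫ X.d (k + 1) k)) ∧
      IsMinimalProjectiveCover α := by
  -- the chain map α
  refine ⟨mkChainHom (fun k => biprod.desc (s k) (s (k + 1) ≫ X.d (k + 1) k)) ?_,
    fun k => rfl, ?_, ?_, ?_⟩
  · intro n
    rw [diskSum_d]
    apply biprod.hom_ext' <;> dsimp only [diskSum_X] <;> simp
  -- projectivity
  · exact diskSum_projective P fun n => (hc n).1
  -- epi
  · apply HomologicalComplex.epi_of_epi_f
    intro n
    apply Preadditive.epi_of_cancel_zero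
    intro T t ht
    have h1 : s n ≫ t = 0 := by
      have := biprod.inl ≫= ht
      simp only [mkChainHom] at this
      erw [biprod.inl_desc_assoc, comp_zero] at this
      exact this
    have h2 : s (n+1) ≫ X.d (n+1) n ≫ t = 0 := by
      have := biprod.inr ≫= ht
      simp only [mkChainHom] at this
      erw [biprod.inr_desc_assoc, comp_zero] at this
      simpa using this
    have hd : X.d (n+1) n ≫ t = 0 := by
      have he : Epi (c (n+1)) := (hc (n+1)).2.1
      have w : X.d (n+2) (n+1) ≫ X.d (n+1) n ≫ t = 0 := by
        rw [← Category.assoc, X.d_comp_d]; simp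
      set u := cokernel.desc (X.d (n+2) (n+1)) (X.d (n+1) n ≫ t) w with hu
      have hπu : cokernel.π (X.d (n+2) (n+1)) ≫ u = X.d (n+1) n ≫ t := cokernel.π_desc _ _ _
      have : c (n+1) ≫ u = 0 := by
        rw [← hs (n+1), Category.assoc, hπu, h2]
      have hu0 : u = 0 := by rwa [← cancel_epi (c (n+1)), comp_zero]
      rw [← hπu, hu0, comp_zero]
    have he : Epi (c n) := (hc n).2.1
    set v := cokernel.desc (X.d (n+1) n) t hd with hv
    have hπv : cokernel.π (X.d (n+1) n) ≫ v = t := cokernel.π_desc _ _ _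
    have : c n ≫ v = 0 := by rw [← hs n, Category.assoc, hπv, h1]
    have hv0 : v = 0 := by rwa [← cancel_epi (c n), comp_zero]
    rw [← hπv, hv0, comp_zero]
  -- minimality
  · intro φ hφ
    -- components of φ
    set a : ∀ n, P n ⟶ P n := fun n => biprod.inl ≫ φ.f n ≫ biprod.fst with ha
    have hcomm : ∀ n, φ.f (n+1) ≫ (diskSum P).d (n+1) n = (diskSum P).d (n+1) n ≫ φ.f n :=
      fun n => φ.comm _ _
    have hinr : ∀ n, biprod.inr ≫ φ.f n = a (n+1) ≫ biprod.inr := by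
      intro n
      have := biprod.inl ≫= hcomm n
      rw [diskSum_d] at this
      erw [Category.assoc, biprod.inl_fst_assoc] at this
      exact this.symm.trans ((Category.assoc _ _ _).trans
        (congrArg (biprod.inl ≫ ·) (Category.assoc _ _ _))).symm
    have hmat : ∀ n, φ.f n =
        Biprod.ofComponents (a n) (biprod.inl ≫ φ.f n ≫ biprod.snd) 0 (a (n+1)) := by
      intro n
      have h21 : biprod.inr ≫ φ.f n ≫ biprod.fst = 0 := by
        erw [← Category.assoc, hinr n, Category.assoc, biprod.inr_fst, comp_zero]
      have h22 : biprod.inr ≫ φ.f n ≫ biprod.snd = a (n+1) := by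
        erw [← Category.assoc, hinr n, Category.assoc, biprod.inr_snd, Category.comp_id]
      conv_lhs => rw [← Biprod.ofComponents_eq (φ.f n)]
      erw [h21, h22]
      rfl
    have haiso : ∀ n, IsIso (a n) := by
      intro n
      apply (hc n).2.2
      have hn : φ.f n ≫ biprod.desc (s n) (s (n+1) ≫ X.d (n+1) n)
          = biprod.desc (s n) (s (n+1) ≫ X.d (n+1) n) :=
        HomologicalComplex.congr_hom hφ n
      have h1 : biprod.inl ≫ φ.f n ≫ biprod.desc (s n) (s (n+1) ≫ X.d (n+1) n) = s n := by
        erw [hn]; simp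
      erw [hmat n, ← Category.assoc, Biprod.inl_ofComponents] at h1
      erw [Preadditive.add_comp, Category.assoc (a n),
        Category.assoc (biprod.inl ≫ φ.f n ≫ biprod.snd), biprod.inl_desc, biprod.inr_desc] at h1
      have := h1 =≫ cokernel.π (X.d (n+1) n)
      simpa [hs n, Preadditive.add_comp, cokernel.condition_assoc] using this
    have : ∀ n, IsIso (φ.f n) := by
      intro n
      rw [hmat n]
      exact isIso_triangular _ _ _ (haiso n) (haiso (n+1))
    exact HomologicalComplex.Hom.isIso_of_components φ

end Aux

/-- If `C` is an abelian category satisfying the minimal cover axiom, then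
so does the category of non-negative chain complexes `Ch(C)`.  Explicitly, for a chain
complex `X`, given minimal projective covers `c n : P n ⟶ coker (∂_{n+1})` in `C` and lifts
`s n : P n ⟶ X n` of them along the quotients `X n ⟶ coker (∂_{n+1})`, the chain map
`⊕_{n ≥ 0} Dⁿ(P n) ⟶ X` which in degree `n` restricts to `s n` on `P n` (and to
`s (n+1) ≫ ∂_{n+1}` on `P (n+1)`) is a minimal projective cover of `X` in `Ch(C)`. -/
theorem hasMinimalCovers_chainComplex
    (hC : HasMinimalCovers C) :
    HasMinimalCovers (ChainComplex C ℕ) ∧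
    ∀ (X : ChainComplex C ℕ) (P : ℕ → C)
      (c : ∀ n : ℕ, P n ⟶ cokernel (X.d (n + 1) n)),
      (∀ n : ℕ, IsMinimalProjectiveCover (c n)) →
      ∀ s : ∀ n : ℕ, P n ⟶ X.X n,
        (∀ n : ℕ, s n ≫ cokernel.π (X.d (n + 1) n) = c n) →
        ∃ α : diskSum P ⟶ X,
          (∀ k : ℕ, α.f k = biprod.desc (s k) (s (k + 1) ≫ X.d (k + 1) k)) ∧
          IsMinimalProjectiveCover α := by
  constructor
  · intro X
    choose P c hc using fun n => hC (cokernel (X.d (n + 1) n))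
    have hs : ∀ n, ∃ s : P n ⟶ X.X n, s ≫ cokernel.π (X.d (n + 1) n) = c n := fun n => by
      have := (hc n).1
      exact Projective.factors (c n) (cokernel.π _)
    choose s hs using hs
    obtain ⟨α, -, hmin⟩ := exists_minimal_cover_chain X P c hc s hs
    exact ⟨_, α, hmin⟩
  · intro X P c hc s hs
    exact exists_minimal_cover_chain X P c hc s hs
end

section
/- Let C be an abelian category satisfying the minimal cover axiom. Assume X is a non-negative chain complex in C such that X_n is projective for every n ≥ 0 and the homology H_n(X) has projective dimension at most 1 for every n ≥ 0. Then X is isomorphic to ⊕_{n≥0} ( S^n(P[n]) ⊕ D^{n+1}(Y_n) ), where, for every n ≥ 0, P[n] is the minimal projective resolution of H_n(X) (a chain complex concentrated in degrees 0 and 1) and Y_n is a projective object of C. -/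
open CategoryTheory CategoryTheory.Limits ZeroObject

universe v u

variable {C : Type u} [Category.{v} C] [Abelian C]

/-- Degrees of the direct sum `⊕ₙ (Sⁿ(P[n]) ⊕ D^{n+1}(Y n))`, where `P[n]` is the chain
complex with `P1 n ⟶ P0 n` concentrated in degrees `1`, `0`.  In degree `k` this direct sum
equals `(P0 k ⊕ P1 (k-1)) ⊕ (Y k ⊕ Y (k-1))` (the summands involving `k - 1` being absent
for `k = 0`). -/
noncomputable def structObj (P0 P1 Y : ℕ → C) : ℕ → C
  | 0 => P0 0 ⊞ Y 0
  | k + 1 => (P0 (k + 1) ⊞ P1 k) ⊞ (Y (k + 1) ⊞ Y k)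

/-- Differentials of the direct sum `⊕ₙ (Sⁿ(P[n]) ⊕ D^{n+1}(Y n))`: the differential
`dP k : P1 k ⟶ P0 k` on the summand `Sᵏ(P[k])` and the identity of `Y k` on the summand
`D^{k+1}(Y k)`. -/
noncomputable def structD (P0 P1 Y : ℕ → C) (dP : ∀ n : ℕ, P1 n ⟶ P0 n) :
    ∀ k : ℕ, structObj P0 P1 Y (k + 1) ⟶ structObj P0 P1 Y k
  | 0 => biprod.desc (biprod.desc 0 (dP 0 ≫ biprod.inl)) (biprod.desc 0 biprod.inr)
  | k + 1 =>
    biprod.desc (biprod.desc 0 (dP (k + 1) ≫ biprod.inl ≫ biprod.inl))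
      (biprod.desc 0 (biprod.inl ≫ biprod.inr))

/-- The chain complex `⊕ₙ (Sⁿ(P[n]) ⊕ D^{n+1}(Y n))`. -/
noncomputable def structComplex (P0 P1 Y : ℕ → C) (dP : ∀ n : ℕ, P1 n ⟶ P0 n) :
    ChainComplex C ℕ :=
  ChainComplex.of (structObj P0 P1 Y) (structD P0 P1 Y dP) (by
    intro k
    match k with
    | 0 =>
      show (biprod.desc (biprod.desc 0 (dP 1 ≫ biprod.inl ≫ biprod.inl))
          (biprod.desc 0 (biprod.inl ≫ biprod.inr)) :
          (P0 2 ⊞ P1 1) ⊞ (Y 2 ⊞ Y 1) ⟶ (P0 1 ⊞ P1 0) ⊞ (Y 1 ⊞ Y 0)) ≫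
        (biprod.desc (biprod.desc 0 (dP 0 ≫ biprod.inl)) (biprod.desc 0 biprod.inr) :
          _ ⟶ P0 0 ⊞ Y 0) = 0
      apply biprod.hom_ext' <;> apply biprod.hom_ext' <;> simp
    | k + 1 =>
      show (biprod.desc (biprod.desc 0 (dP (k + 2) ≫ biprod.inl ≫ biprod.inl))
          (biprod.desc 0 (biprod.inl ≫ biprod.inr)) :
          (P0 (k + 3) ⊞ P1 (k + 2)) ⊞ (Y (k + 3) ⊞ Y (k + 2)) ⟶
            (P0 (k + 2) ⊞ P1 (k + 1)) ⊞ (Y (k + 2) ⊞ Y (k + 1))) ≫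
        (biprod.desc (biprod.desc 0 (dP (k + 1) ≫ biprod.inl ≫ biprod.inl))
          (biprod.desc 0 (biprod.inl ≫ biprod.inr)) :
          _ ⟶ (P0 (k + 1) ⊞ P1 k) ⊞ (Y (k + 1) ⊞ Y k)) = 0
      apply biprod.hom_ext' <;> apply biprod.hom_ext' <;> simp)



theorem projective_of_retract {Z W : C} (s : Z ⟶ W) (r : W ⟶ Z) (h : s ≫ r = 𝟙 Z)
    (hW : Projective W) : Projective Z where
  factors {E Xo} f e he := by
    obtain ⟨g, hg⟩ := hW.factors (r ≫ f) e
    exact ⟨s ≫ g, by rw [Category.assoc, hg, ← Category.assoc, h, Category.id_comp]⟩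

theorem splitIso {Z Xo B : C} (i : Z ⟶ Xo) (t : Xo ⟶ B) (σ : B ⟶ Xo) (ρ : Xo ⟶ Z)
    (hmono : Mono i) (hit : i ≫ t = 0) (hσt : σ ≫ t = 𝟙 B)
    (hρ : ρ ≫ i = 𝟙 Xo - t ≫ σ) : IsIso (biprod.desc i σ) := by
  have hiρ : i ≫ ρ = 𝟙 Z := by
    rw [← cancel_mono i, Category.assoc, hρ, Category.id_comp, Preadditive.comp_sub,
      Category.comp_id, reassoc_of% hit, zero_comp, sub_zero]
  have hσρ : σ ≫ ρ = 0 := by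
    rw [← cancel_mono i, Category.assoc, hρ, zero_comp, Preadditive.comp_sub,
      Category.comp_id, reassoc_of% hσt, sub_self]
  refine ⟨biprod.lift ρ t, ?_, ?_⟩
  · apply biprod.hom_ext' <;> apply biprod.hom_ext <;>
      simp [hiρ, hit, hσρ, hσt, -Category.comp_id]
  · rw [biprod.lift_desc, hρ, sub_add_cancel]

theorem splitIso_kernel {Xo B : C} (t : Xo ⟶ B) (σ : B ⟶ Xo) (h : σ ≫ t = 𝟙 B) :
    IsIso (biprod.desc (kernel.ι t) σ) :=
  splitIso _ _ _ (kernel.lift t (𝟙 Xo - t ≫ σ) (by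
      rw [Preadditive.sub_comp, Category.id_comp, Category.assoc, h, Category.comp_id,
        sub_self]))
    inferInstance (kernel.condition t) h (kernel.lift_ι _ _ _)

theorem projective_of_isIso_desc {Z W B : C} (i : Z ⟶ W) (σ : B ⟶ W)
    (h : IsIso (biprod.desc i σ)) (hW : Projective W) : Projective Z := by
  obtain ⟨dinv, hinv1, hinv2⟩ := h
  refine projective_of_retract i (dinv ≫ biprod.fst) ?_ hW
  have h2 : i ≫ dinv = biprod.inl := by
    have h1 : biprod.inl ≫ biprod.desc i σ = i := biprod.inl_desc _ _
    calc i ≫ dinv = (biprod.inl ≫ biprod.desc i σ) ≫ dinv := by rw [h1]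
    _ = biprod.inl := by rw [Category.assoc, hinv1, Category.comp_id]
  rw [← Category.assoc, h2, biprod.inl_fst]

theorem splitIso_of_retract {P W : C} (u : P ⟶ W) (r : W ⟶ P) (h : u ≫ r = 𝟙 P) :
    IsIso (biprod.desc u (kernel.ι r) : P ⊞ kernel r ⟶ W) := by
  have hk : (𝟙 W - r ≫ u) ≫ r = 0 := by
    rw [Preadditive.sub_comp, Category.id_comp, Category.assoc, h, Category.comp_id, sub_self]
  refine ⟨biprod.lift r (kernel.lift r (𝟙 W - r ≫ u) hk), ?_, ?_⟩
  · apply biprod.hom_ext' <;> apply biprod.hom_ext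
    · simp [h]
    · rw [← cancel_mono (kernel.ι r)]
      simp [h, reassoc_of% h, Preadditive.comp_sub]
    · simp [kernel.condition]
    · rw [← cancel_mono (kernel.ι r)]
      simp [Preadditive.comp_sub, kernel.condition_assoc]
  · rw [biprod.lift_desc, kernel.lift_ι, add_sub_cancel]

theorem projective_of_isIso_desc' {Z W B : C} (σ : B ⟶ W) (i : Z ⟶ W)
    (h : IsIso (biprod.desc σ i)) (hW : Projective W) : Projective Z := by
  obtain ⟨dinv, hinv1, hinv2⟩ := h
  refine projective_of_retract i (dinv ≫ biprod.snd) ?_ hW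
  have h2 : i ≫ dinv = biprod.inr := by
    have h1 : biprod.inr ≫ biprod.desc σ i = i := biprod.inr_desc _ _
    calc i ≫ dinv = (biprod.inr ≫ biprod.desc σ i) ≫ dinv := by rw [h1]
    _ = biprod.inr := by rw [Category.assoc, hinv1, Category.comp_id]
  rw [← Category.assoc, h2, biprod.inr_snd]

theorem mono_biprod_map {A B A' B' : C} (f : A ⟶ B) (g : A' ⟶ B') (hf : Mono f)
    (hg : Mono g) : Mono (biprod.map f g) := by
  constructor
  intro T a b hab
  apply biprod.hom_ext
  · have h6 := congrArg (fun z => z ≫ biprod.fst) hab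
    simp only [Category.assoc, biprod.map_fst] at h6
    rw [← Category.assoc, ← Category.assoc] at h6
    exact (cancel_mono f).mp h6
  · have h6 := congrArg (fun z => z ≫ biprod.snd) hab
    simp only [Category.assoc, biprod.map_snd] at h6
    rw [← Category.assoc, ← Category.assoc] at h6
    exact (cancel_mono g).mp h6

theorem schanuel {A P : C} (p : P ⟶ A) (hp : Epi p) (hP : Projective P)
    (h : ProjDimLE1 A) : Projective (kernel p) := by
  obtain ⟨Q1, Q0, g, e, w, hQ1, hQ0, hg, he, hex⟩ := h
  haveI := hp; haveI := hP; haveI := hQ0; haveI := hQ1; haveI := hg; haveI := he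
  -- the pullback L of p and e
  -- kernel of fst is iso to kernel of e
  let u : kernel e ⟶ kernel (pullback.fst p e) :=
    kernel.lift _ (pullback.lift (f := p) (g := e) 0 (kernel.ι e) (by simp)) (by rw [pullback.lift_fst])
  let v : kernel (pullback.fst p e) ⟶ kernel e :=
    kernel.lift e (kernel.ι _ ≫ pullback.snd p e) (by
      rw [Category.assoc, ← pullback.condition, ← Category.assoc, kernel.condition,
        zero_comp])
  have huv : u ≫ v = 𝟙 _ := by
    rw [← cancel_mono (kernel.ι e)]
    simp [u, v]
    rw [pullback.lift_snd]
  have hvu : v ≫ u = 𝟙 _ := by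
    rw [← cancel_mono (kernel.ι (pullback.fst p e))]
    apply pullback.hom_ext <;> simp [u, v, kernel.condition]
    · rw [pullback.lift_fst, comp_zero]
    · rw [pullback.lift_snd, kernel.lift_ι]
  -- kernel e is iso to Q1
  have hQker : Projective (kernel e) := by
    have hS : (ShortComplex.mk g e w).Exact := hex
    have hlim := hS.fIsKernel
    exact Projective.of_iso
      (IsLimit.conePointUniqueUpToIso hlim (limit.isLimit (parallelPair e 0))) hQ1
  have hkfst : Projective (kernel (pullback.fst p e)) :=
    Projective.of_iso ⟨u, v, huv, hvu⟩ hQker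
  -- L is projective
  let σ1 : P ⟶ pullback p e := Projective.factorThru (𝟙 P) (pullback.fst p e)
  have hσ1 : σ1 ≫ pullback.fst p e = 𝟙 P := Projective.factorThru_comp _ _
  have hL : Projective (pullback p e) := by
    haveI : Projective (kernel (pullback.fst p e) ⊞ P) := inferInstance
    exact Projective.of_iso (@asIso _ _ _ _ _ (splitIso_kernel _ _ hσ1)) this
  -- kernel of snd is a retract of L
  let σ2 : Q0 ⟶ pullback p e := Projective.factorThru (𝟙 Q0) (pullback.snd p e)
  have hσ2 : σ2 ≫ pullback.snd p e = 𝟙 Q0 := Projective.factorThru_comp _ _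
  have hksnd : Projective (kernel (pullback.snd p e)) :=
    projective_of_isIso_desc _ _ (splitIso_kernel _ _ hσ2) hL
  -- kernel p is iso to kernel of snd
  let u' : kernel p ⟶ kernel (pullback.snd p e) :=
    kernel.lift _ (pullback.lift (f := p) (g := e) (kernel.ι p) 0 (by simp)) (by rw [pullback.lift_snd])
  let v' : kernel (pullback.snd p e) ⟶ kernel p :=
    kernel.lift p (kernel.ι _ ≫ pullback.fst p e) (by
      rw [Category.assoc, pullback.condition, ← Category.assoc, kernel.condition, zero_comp])
  have huv' : u' ≫ v' = 𝟙 _ := by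
    rw [← cancel_mono (kernel.ι p)]
    simp [u', v']
    rw [pullback.lift_fst]
  have hvu' : v' ≫ u' = 𝟙 _ := by
    rw [← cancel_mono (kernel.ι (pullback.snd p e))]
    apply pullback.hom_ext <;> simp [u', v', kernel.condition]
    · rw [pullback.lift_fst, kernel.lift_ι]
    · rw [pullback.lift_snd, comp_zero]
  exact Projective.of_iso ⟨v', u', hvu', huv'⟩ hksnd

theorem stage (hC : HasMinimalCovers C) (X : ChainComplex C ℕ) (n : ℕ)
    (hpd : ProjDimLE1 (X.homology n)) (hZ : Projective (X.cycles n)) :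
    ∃ (P0 P1 : C) (dP : P1 ⟶ P0) (p : P0 ⟶ X.homology n) (K : C)
      (f0 : P0 ⟶ X.cycles n) (fK : K ⟶ X.cycles n)
      (t : X.X (n+1) ⟶ P1 ⊞ K) (σ : P1 ⊞ K ⟶ X.X (n+1)),
      IsMinimalLen1Resolution dP p ∧ Projective K ∧ Projective P1 ∧
      IsIso (biprod.desc f0 fK) ∧
      Mono (biprod.desc (dP ≫ f0) fK) ∧
      t ≫ biprod.desc (dP ≫ f0) fK = X.toCycles (n+1) n ∧
      σ ≫ t = 𝟙 (P1 ⊞ K) := by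
  obtain ⟨P0, p, hP0, hpepi, hmin⟩ := hC (X.homology n)
  haveI := hP0; haveI := hpepi; haveI := hZ
  have hkerproj : Projective (kernel p) := schanuel p hpepi hP0 hpd
  obtain ⟨P1, q, hP1, hqepi, hqmin⟩ := hC (kernel p)
  haveI := hP1; haveI := hqepi; haveI := hkerproj
  -- q is mono, hence an isomorphism
  let s : kernel p ⟶ P1 := Projective.factorThru (𝟙 _) q
  have hs : s ≫ q = 𝟙 _ := Projective.factorThru_comp _ _
  have hφiso : IsIso (q ≫ s) := hqmin _ (by rw [Category.assoc, hs, Category.comp_id])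
  haveI : Mono q := by
    constructor
    intro T a b hab
    have h5 : a ≫ (q ≫ s) = b ≫ (q ≫ s) := by
      rw [← Category.assoc, hab, Category.assoc]
    haveI := hφiso
    exact (cancel_mono (q ≫ s)).mp h5
  haveI : IsIso q := isIso_of_mono_of_epi q
  set dP : P1 ⟶ P0 := q ≫ kernel.ι p with hdP
  haveI hdPmono : Mono dP := mono_comp _ _
  have w : dP ≫ p = 0 := by rw [hdP, Category.assoc, kernel.condition, comp_zero]
  have hliftq : kernel.lift p dP w = q := by
    rw [← cancel_mono (kernel.ι p), kernel.lift_ι, hdP]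
  have hres : IsMinimalLen1Resolution dP p :=
    ⟨hdPmono, w, ⟨hP0, hpepi, hmin⟩, by rw [hliftq]; exact ⟨hP1, hqepi, hqmin⟩⟩
  -- split off P0 from the cycles
  set u : P0 ⟶ X.cycles n := Projective.factorThru p (X.homologyπ n) with hu'
  have hu : u ≫ X.homologyπ n = p := Projective.factorThru_comp _ _
  set v : X.cycles n ⟶ P0 := Projective.factorThru (X.homologyπ n) p with hv'
  have hv : v ≫ p = X.homologyπ n := Projective.factorThru_comp _ _
  have hφ2 : (u ≫ v) ≫ p = p := by rw [Category.assoc, hv, hu]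
  have hφ2iso : IsIso (u ≫ v) := hmin _ hφ2
  haveI := hφ2iso
  set r : X.cycles n ⟶ P0 := v ≫ inv (u ≫ v) with hr'
  have hur : u ≫ r = 𝟙 P0 := by rw [hr', ← Category.assoc, IsIso.hom_inv_id]
  have h9 : inv (u ≫ v) ≫ p = p := by rw [IsIso.inv_comp_eq, hφ2]
  have hrp : r ≫ p = X.homologyπ n := by
    rw [hr', Category.assoc, h9, hv]
  set K := kernel r with hK'
  set fK : K ⟶ X.cycles n := kernel.ι r with hfK'
  have hziso : IsIso (biprod.desc u fK) := splitIso_of_retract u r hur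
  have hK : Projective K := projective_of_isIso_desc' u fK hziso hZ
  have hfKr : fK ≫ r = 0 := kernel.condition r
  have hfKπ : fK ≫ X.homologyπ n = 0 := by
    rw [← hrp, ← Category.assoc, hfKr, zero_comp]
  -- factorization through the inclusion of the boundaries
  have fact : ∀ {T : C} (gm : T ⟶ X.cycles n), gm ≫ X.homologyπ n = 0 →
      ∃ sm : T ⟶ P1 ⊞ K, sm ≫ biprod.desc (dP ≫ u) fK = gm := by
    intro T gm hgm
    obtain ⟨dinv, hinv1, hinv2⟩ := hziso
    set a : T ⟶ P0 := gm ≫ dinv ≫ biprod.fst with ha'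
    set b : T ⟶ K := gm ≫ dinv ≫ biprod.snd with hb'
    have hab : a ≫ u + b ≫ fK = gm := by
      have e1 : biprod.fst ≫ u + biprod.snd ≫ fK = biprod.desc u fK :=
        biprod.desc_eq.symm
      calc a ≫ u + b ≫ fK
          = gm ≫ dinv ≫ (biprod.fst ≫ u + biprod.snd ≫ fK) := by
            rw [ha', hb']
            simp only [Preadditive.comp_add, Category.assoc]
        _ = gm := by rw [e1, hinv2, Category.comp_id]
    have hap : a ≫ p = 0 := by
      have h3 := congrArg (fun z => z ≫ X.homologyπ n) hab
      simp only [Preadditive.add_comp, Category.assoc, hfKπ, comp_zero, add_zero, hgm] at h3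
      rw [← hu]
      exact h3
    set cc : T ⟶ kernel p := kernel.lift p a hap with hc'
    have hcd : (cc ≫ inv q) ≫ dP = a := by
      rw [hdP, Category.assoc, IsIso.inv_hom_id_assoc, hc', kernel.lift_ι]
    refine ⟨biprod.lift (cc ≫ inv q) b, ?_⟩
    rw [biprod.lift_desc, ← Category.assoc, hcd, hab]
  -- the inclusion of the boundaries is a monomorphism
  have hmonoι : Mono (biprod.desc (dP ≫ u) fK) := by
    have hfac : biprod.map dP (𝟙 K) ≫ biprod.desc u fK = biprod.desc (dP ≫ u) fK := by
      apply biprod.hom_ext' <;> simp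
    haveI : Mono (biprod.map dP (𝟙 K)) := mono_biprod_map dP (𝟙 K) hdPmono inferInstance
    rw [← hfac]
    exact mono_comp _ _
  have h0 : biprod.desc (dP ≫ u) fK ≫ X.homologyπ n = 0 := by
    apply biprod.hom_ext'
    · rw [biprod.inl_desc_assoc, Category.assoc, hu, w, comp_zero]
    · rw [biprod.inr_desc_assoc, hfKπ, comp_zero]
  obtain ⟨t, ht⟩ := fact (X.toCycles (n+1) n) (X.toCycles_comp_homologyπ _ _)
  set m : P1 ⊞ K ⟶ kernel (X.homologyπ n) :=
    kernel.lift _ (biprod.desc (dP ≫ u) fK) h0 with hm'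
  have hm : m ≫ kernel.ι _ = biprod.desc (dP ≫ u) fK := kernel.lift_ι _ _ _
  haveI : Mono m := by
    have h7 : Mono (m ≫ kernel.ι (X.homologyπ n)) := by rw [hm]; exact hmonoι
    exact mono_of_mono m (kernel.ι (X.homologyπ n))
  obtain ⟨s2, hs2⟩ := fact (kernel.ι (X.homologyπ n)) (kernel.condition _)
  have hs2m : s2 ≫ m = 𝟙 _ := by
    rw [← cancel_mono (kernel.ι (X.homologyπ n)), Category.assoc, hm, hs2, Category.id_comp]
  haveI : IsIso m :=
    ⟨s2, by rw [← cancel_mono m, Category.assoc, hs2m, Category.comp_id, Category.id_comp], hs2m⟩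
  have hexact : (ShortComplex.mk (X.toCycles (n+1) n) (X.homologyπ n)
      (X.toCycles_comp_homologyπ _ _)).Exact :=
    ShortComplex.exact_of_g_is_cokernel _
      (X.homologyIsCokernel (n+1) n ((ComplexShape.down ℕ).prev_eq' rfl))
  have hepi0 := (ShortComplex.exact_iff_epi_kernel_lift _).mp hexact
  have htm : t ≫ m = kernel.lift (X.homologyπ n) (X.toCycles (n+1) n)
      (X.toCycles_comp_homologyπ _ _) := by
    rw [← cancel_mono (kernel.ι (X.homologyπ n)), Category.assoc, hm, ht, kernel.lift_ι]
  haveI : Epi t := by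
    have h8 : t = kernel.lift (X.homologyπ n) (X.toCycles (n+1) n)
        (X.toCycles_comp_homologyπ _ _) ≫ inv m := by
      rw [← htm, Category.assoc, IsIso.hom_inv_id, Category.comp_id]
    rw [h8]
    haveI := hepi0
    exact epi_comp _ _
  exact ⟨P0, P1, dP, p, K, u, fK, t, Projective.factorThru (𝟙 _) t, hres, hK, hP1, hziso,
    hmonoι, ht, Projective.factorThru_comp _ _⟩

theorem cycles_proj (hC : HasMinimalCovers C) (X : ChainComplex C ℕ)
    (hcof : ∀ n : ℕ, Projective (X.X n))
    (hpd : ∀ n : ℕ, ProjDimLE1 (X.homology n)) :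
    ∀ n : ℕ, Projective (X.cycles n) := by
  intro n
  induction n with
  | zero =>
    haveI := X.isIso_iCycles 0 0 ChainComplex.next_nat_zero (X.shape 0 0 (by simp))
    exact Projective.of_iso (asIso (X.iCycles 0)).symm (hcof 0)
  | succ n ih =>
    obtain ⟨P0, P1, dP, p, K, f0, fK, t, σ, hres, hK, hP1, hziso, hmonoι, ht, hσt⟩ :=
      stage hC X n (hpd n) ih
    haveI := hmonoι
    have hσd : σ ≫ X.d (n+1) n = biprod.desc (dP ≫ f0) fK ≫ X.iCycles n := by
      calc σ ≫ X.d (n+1) n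
          = σ ≫ X.toCycles (n+1) n ≫ X.iCycles n := by
            rw [HomologicalComplex.toCycles_i]
        _ = σ ≫ (t ≫ biprod.desc (dP ≫ f0) fK) ≫ X.iCycles n := by rw [ht]
        _ = (σ ≫ t) ≫ biprod.desc (dP ≫ f0) fK ≫ X.iCycles n := by
            simp only [Category.assoc]
        _ = biprod.desc (dP ≫ f0) fK ≫ X.iCycles n := by rw [hσt, Category.id_comp]
    have hit : X.iCycles (n+1) ≫ t = 0 := by
      rw [← cancel_mono (biprod.desc (dP ≫ f0) fK), Category.assoc, ht, zero_comp]
      rw [← cancel_mono (X.iCycles n), Category.assoc, HomologicalComplex.toCycles_i,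
        zero_comp]
      exact X.iCycles_d (n+1) n
    have hρ0 : (𝟙 (X.X (n+1)) - t ≫ σ) ≫ X.d (n+1) n = 0 := by
      rw [Preadditive.sub_comp, Category.id_comp, Category.assoc, hσd,
        ← Category.assoc t, ht, HomologicalComplex.toCycles_i, sub_self]
    set ρ : X.X (n+1) ⟶ X.cycles (n+1) :=
      X.liftCycles (𝟙 (X.X (n+1)) - t ≫ σ) n (ChainComplex.next_nat_succ n) hρ0 with hρ'
    have hρ : ρ ≫ X.iCycles (n+1) = 𝟙 (X.X (n+1)) - t ≫ σ := X.liftCycles_i _ _ _ _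
    have hiρ : X.iCycles (n+1) ≫ ρ = 𝟙 (X.cycles (n+1)) := by
      rw [← cancel_mono (X.iCycles (n+1)), Category.assoc, hρ, Preadditive.comp_sub,
        Category.comp_id, ← Category.assoc, hit, zero_comp, sub_zero, Category.id_comp]
    exact projective_of_retract (X.iCycles (n+1)) ρ hiρ (hcof (n+1))


/-- Shuffling the middle factors of a double binary biproduct. -/
noncomputable def biprodShuffle (A B A' B' : C) : (A ⊞ B) ⊞ (A' ⊞ B') ≅ (A ⊞ A') ⊞ (B ⊞ B') where
  hom := biprod.desc (biprod.desc (biprod.inl ≫ biprod.inl) (biprod.inl ≫ biprod.inr))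
    (biprod.desc (biprod.inr ≫ biprod.inl) (biprod.inr ≫ biprod.inr))
  inv := biprod.desc (biprod.desc (biprod.inl ≫ biprod.inl) (biprod.inl ≫ biprod.inr))
    (biprod.desc (biprod.inr ≫ biprod.inl) (biprod.inr ≫ biprod.inr))
  hom_inv_id := by apply biprod.hom_ext' <;> apply biprod.hom_ext' <;> simp
  inv_hom_id := by apply biprod.hom_ext' <;> apply biprod.hom_ext' <;> simp

/-- The components of the isomorphism in the structure theorem. -/
noncomputable def structECompAux (X : ChainComplex C ℕ) (P0 P1 K : ℕ → C) (dP : ∀ n, P1 n ⟶ P0 n)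
    (f0 : ∀ n, P0 n ⟶ X.cycles n) (fK : ∀ n, K n ⟶ X.cycles n)
    (σ : ∀ n, P1 n ⊞ K n ⟶ X.X (n+1))
    (hz : ∀ k, IsIso (biprod.desc (f0 k) (fK k))) (hi0 : IsIso (X.iCycles 0))
    (hsplit : ∀ k, IsIso (biprod.desc (X.iCycles (k+1)) (σ k))) :
    ∀ k, (structComplex P0 P1 K dP).X k ≅ X.X k
  | 0 => (@asIso _ _ _ _ _ (hz 0)) ≪≫ @asIso _ _ _ _ _ hi0
  | (k+1) => biprodShuffle (P0 (k+1)) (P1 k) (K (k+1)) (K k) ≪≫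
      biprod.mapIso (@asIso _ _ _ _ _ (hz (k+1))) (Iso.refl (P1 k ⊞ K k)) ≪≫
      @asIso _ _ _ _ _ (hsplit k)

theorem structECompAux_zero_hom (X : ChainComplex C ℕ) (P0 P1 K : ℕ → C) (dP : ∀ n, P1 n ⟶ P0 n)
    (f0 : ∀ n, P0 n ⟶ X.cycles n) (fK : ∀ n, K n ⟶ X.cycles n)
    (σ : ∀ n, P1 n ⊞ K n ⟶ X.X (n+1))
    (hz : ∀ k, IsIso (biprod.desc (f0 k) (fK k))) (hi0 : IsIso (X.iCycles 0))
    (hsplit : ∀ k, IsIso (biprod.desc (X.iCycles (k+1)) (σ k))) :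
    (structECompAux X P0 P1 K dP f0 fK σ hz hi0 hsplit 0).hom =
      biprod.desc (f0 0) (fK 0) ≫ X.iCycles 0 := by
  simp [structECompAux]
  rfl

theorem structECompAux_succ_hom (X : ChainComplex C ℕ) (P0 P1 K : ℕ → C) (dP : ∀ n, P1 n ⟶ P0 n)
    (f0 : ∀ n, P0 n ⟶ X.cycles n) (fK : ∀ n, K n ⟶ X.cycles n)
    (σ : ∀ n, P1 n ⊞ K n ⟶ X.X (n+1))
    (hz : ∀ k, IsIso (biprod.desc (f0 k) (fK k))) (hi0 : IsIso (X.iCycles 0))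
    (hsplit : ∀ k, IsIso (biprod.desc (X.iCycles (k+1)) (σ k))) (k : ℕ) :
    (structECompAux X P0 P1 K dP f0 fK σ hz hi0 hsplit (k+1)).hom =
      biprod.desc (biprod.desc (f0 (k+1) ≫ X.iCycles (k+1)) (biprod.inl ≫ σ k))
        (biprod.desc (fK (k+1) ≫ X.iCycles (k+1)) (biprod.inr ≫ σ k)) := by
  show (biprodShuffle (P0 (k+1)) (P1 k) (K (k+1)) (K k)).hom ≫
      biprod.map (biprod.desc (f0 (k+1)) (fK (k+1))) (𝟙 (P1 k ⊞ K k)) ≫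
      biprod.desc (X.iCycles (k+1)) (σ k) = _
  apply biprod.hom_ext' <;> apply biprod.hom_ext' <;>
    simp [structECompAux, biprodShuffle]

/-- **Statement 5 (structure theorem for cofibrant objects).**  Let `C` be an abelian
category satisfying the minimal cover axiom, and `X` a non-negative chain complex in `C`
with `X n` projective for every `n` and `H_n(X)` of projective dimension at most 1 for
every `n`.  Then `X ≅ ⊕ₙ (Sⁿ(P[n]) ⊕ D^{n+1}(Y n))`, where `P[n]` is the minimal
projective resolution of `H_n(X)` (concentrated in degrees `0` and `1`) and each `Y n` is
projective. -/
theorem structure_theorem_for_cofibrant_chain_complexes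
    (hC : HasMinimalCovers C)
    (X : ChainComplex C ℕ) (hcof : ∀ n : ℕ, Projective (X.X n))
    (hpd : ∀ n : ℕ, ProjDimLE1 (X.homology n)) :
    ∃ (P0 P1 : ℕ → C) (dP : ∀ n : ℕ, P1 n ⟶ P0 n)
      (p : ∀ n : ℕ, P0 n ⟶ X.homology n) (Y : ℕ → C),
      (∀ n : ℕ, IsMinimalLen1Resolution (dP n) (p n)) ∧
      (∀ n : ℕ, Projective (Y n)) ∧
      Nonempty (X ≅ structComplex P0 P1 Y dP) := by
  have hZ := cycles_proj hC X hcof hpd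
  choose P0 P1 dP p K f0 fK t σ hres hK hP1 hziso hmonoι ht hσt using
    fun n => stage hC X n (hpd n) (hZ n)
  have hσd : ∀ n, σ n ≫ X.d (n+1) n = biprod.desc (dP n ≫ f0 n) (fK n) ≫ X.iCycles n := by
    intro n
    calc σ n ≫ X.d (n+1) n
        = σ n ≫ X.toCycles (n+1) n ≫ X.iCycles n := by
          rw [HomologicalComplex.toCycles_i]
      _ = σ n ≫ (t n ≫ biprod.desc (dP n ≫ f0 n) (fK n)) ≫ X.iCycles n := by rw [ht]
      _ = (σ n ≫ t n) ≫ biprod.desc (dP n ≫ f0 n) (fK n) ≫ X.iCycles n := by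
          simp only [Category.assoc]
      _ = biprod.desc (dP n ≫ f0 n) (fK n) ≫ X.iCycles n := by
          rw [hσt, Category.id_comp]
  have hit : ∀ n, X.iCycles (n+1) ≫ t n = 0 := by
    intro n
    haveI := hmonoι n
    rw [← cancel_mono (biprod.desc (dP n ≫ f0 n) (fK n)), Category.assoc, ht, zero_comp]
    rw [← cancel_mono (X.iCycles n), Category.assoc, HomologicalComplex.toCycles_i,
      zero_comp]
    exact X.iCycles_d (n+1) n
  have hρ0 : ∀ n, (𝟙 (X.X (n+1)) - t n ≫ σ n) ≫ X.d (n+1) n = 0 := by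
    intro n
    rw [Preadditive.sub_comp, Category.id_comp, Category.assoc, hσd,
      ← Category.assoc (t n), ht, HomologicalComplex.toCycles_i, sub_self]
  have hsplit : ∀ k, IsIso (biprod.desc (X.iCycles (k+1)) (σ k)) := by
    intro k
    refine splitIso _ _ _
      (X.liftCycles (𝟙 (X.X (k+1)) - t k ≫ σ k) k (ChainComplex.next_nat_succ k) (hρ0 k))
      inferInstance (hit k) (hσt k) (X.liftCycles_i _ _ _ _)
  have hi0 : IsIso (X.iCycles 0) :=
    X.isIso_iCycles 0 0 ChainComplex.next_nat_zero (X.shape 0 0 (by simp))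
  refine ⟨P0, P1, dP, p, K, hres, hK, ?_⟩
  refine ⟨(HomologicalComplex.Hom.isoOfComponents
    (structECompAux X P0 P1 K dP f0 fK σ hziso hi0 hsplit) ?_).symm⟩
  intro i j hij
  obtain rfl : i = j + 1 := hij.symm
  have hdstruct : (structComplex P0 P1 K dP).d (j+1) j = structD P0 P1 K dP j :=
    ChainComplex.of_d _ _ _
  rw [hdstruct]
  cases j with
  | zero =>
    rw [structECompAux_succ_hom, structECompAux_zero_hom]
    show (biprod.desc (biprod.desc (f0 1 ≫ X.iCycles 1) (biprod.inl ≫ σ 0))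
          (biprod.desc (fK 1 ≫ X.iCycles 1) (biprod.inr ≫ σ 0)) :
          (P0 1 ⊞ P1 0) ⊞ (K 1 ⊞ K 0) ⟶ X.X 1) ≫ X.d 1 0 =
        (biprod.desc (biprod.desc 0 (dP 0 ≫ biprod.inl)) (biprod.desc 0 biprod.inr) :
          (P0 1 ⊞ P1 0) ⊞ (K 1 ⊞ K 0) ⟶ P0 0 ⊞ K 0) ≫ biprod.desc (f0 0) (fK 0) ≫ X.iCycles 0
    apply biprod.hom_ext' <;> apply biprod.hom_ext' <;>
      simp [structD, hσd 0, X.iCycles_d]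
  | succ m =>
    rw [structECompAux_succ_hom, structECompAux_succ_hom]
    show (biprod.desc (biprod.desc (f0 (m+1+1) ≫ X.iCycles (m+1+1)) (biprod.inl ≫ σ (m+1)))
          (biprod.desc (fK (m+1+1) ≫ X.iCycles (m+1+1)) (biprod.inr ≫ σ (m+1))) :
          (P0 (m+1+1) ⊞ P1 (m+1)) ⊞ (K (m+1+1) ⊞ K (m+1)) ⟶ X.X (m+1+1)) ≫ X.d (m+1+1) (m+1) =
        (biprod.desc (biprod.desc 0 (dP (m+1) ≫ biprod.inl ≫ biprod.inl))
            (biprod.desc 0 (biprod.inl ≫ biprod.inr)) :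
          (P0 (m+1+1) ⊞ P1 (m+1)) ⊞ (K (m+1+1) ⊞ K (m+1)) ⟶ (P0 (m+1) ⊞ P1 m) ⊞ (K (m+1) ⊞ K m)) ≫
        (biprod.desc (biprod.desc (f0 (m+1) ≫ X.iCycles (m+1)) (biprod.inl ≫ σ m))
          (biprod.desc (fK (m+1) ≫ X.iCycles (m+1)) (biprod.inr ≫ σ m)) :
          (P0 (m+1) ⊞ P1 m) ⊞ (K (m+1) ⊞ K m) ⟶ X.X (m+1))
    apply biprod.hom_ext' <;> apply biprod.hom_ext' <;>
      simp [structD, hσd (m+1), X.iCycles_d]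
end

section
/- Let C be an abelian category satisfying the minimal cover axiom, and let X be a non-negative chain complex in C such that X_n is projective for every n ≥ 0. Let m ≥ 0 be such that X_i = 0 for all i < m and H_m(X) = 0. Then X is isomorphic to D^{m+1}(X_m) ⊕ X' for some chain complex X' with X'_n projective for every n and X'_i = 0 for all i ≤ m. -/
open CategoryTheory CategoryTheory.Limits ZeroObject

universe v u

variable {C : Type u} [Category.{v} C] [Abelian C]

section Helpers

/-- degreewise biproduct iso -/
noncomputable def biprodXIso {ι : Type*} {c : ComplexShape ι} (A B : HomologicalComplex C c)
    (n : ι) : (A ⊞ B).X n ≅ A.X n ⊞ B.X n where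
  hom := biprod.lift ((biprod.fst : A ⊞ B ⟶ A).f n) ((biprod.snd : A ⊞ B ⟶ B).f n)
  inv := biprod.desc ((biprod.inl : A ⟶ A ⊞ B).f n) ((biprod.inr : B ⟶ A ⊞ B).f n)
  hom_inv_id := by
    rw [biprod.lift_desc, ← HomologicalComplex.comp_f, ← HomologicalComplex.comp_f,
      ← HomologicalComplex.add_f_apply, biprod.total, HomologicalComplex.id_f]
  inv_hom_id := by
    apply biprod.hom_ext'
    · apply biprod.hom_ext <;> simp [← HomologicalComplex.comp_f]
    · apply biprod.hom_ext <;> simp [← HomologicalComplex.comp_f]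

lemma biprodXIso_d {ι : Type*} {c : ComplexShape ι} (A B : HomologicalComplex C c) (i j : ι) :
    (A ⊞ B).d i j ≫ (biprodXIso A B j).hom =
      (biprodXIso A B i).hom ≫ biprod.map (A.d i j) (B.d i j) := by
  apply biprod.hom_ext <;> simp [biprodXIso, HomologicalComplex.Hom.comm]

/-- `A ≅ A ⊞ B` when `B` is zero. -/
@[simps]
noncomputable def biprodIsoOfIsZeroRight {A B : C} (h : IsZero B) : A ≅ A ⊞ B where
  hom := biprod.inl
  inv := biprod.fst
  inv_hom_id := by
    apply biprod.hom_ext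
    · simp
    · simp [h.eq_of_tgt (biprod.snd : A ⊞ B ⟶ B) 0]

/-- `B ≅ A ⊞ B` when `A` is zero. -/
@[simps]
noncomputable def biprodIsoOfIsZeroLeft {A B : C} (h : IsZero A) : B ≅ A ⊞ B where
  hom := biprod.inr
  inv := biprod.snd
  inv_hom_id := by
    apply biprod.hom_ext
    · simp [h.eq_of_tgt (biprod.fst : A ⊞ B ⟶ A) 0]
    · simp

lemma isZero_biprod {A B : C} (hA : IsZero A) (hB : IsZero B) : IsZero (A ⊞ B) :=
  hA.of_iso (biprodIsoOfIsZeroRight hB).symm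

lemma projective_of_isZero {Z : C} (h : IsZero Z) : Projective Z :=
  ⟨fun f _ _ => ⟨0, by rw [zero_comp, h.eq_of_src f 0]⟩⟩

omit [Abelian C] in
lemma projective_of_retract_s7 {K P : C} [Preadditive C] [Projective P] (i : K ⟶ P) (r : P ⟶ K)
    (hir : i ≫ r = 𝟙 K) : Projective K := by
  constructor
  intro E Xo f e he
  exact ⟨i ≫ Projective.factorThru (r ≫ f) e, by
    rw [Category.assoc, Projective.factorThru_comp, ← Category.assoc, hir, Category.id_comp]⟩

lemma epi_d_of_isZero_homology (X : ChainComplex C ℕ) (m : ℕ)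
    (hm : ∀ i : ℕ, i < m → IsZero (X.X i)) (hH : IsZero (X.homology m)) :
    Epi (X.d (m + 1) m) := by
  have hE : X.ExactAt m := (X.exactAt_iff_isZero_homology m).2 hH
  have hnext : (ComplexShape.down ℕ).next m = m - 1 := by
    cases m with
    | zero => exact ChainComplex.next_nat_zero
    | succ k => exact ChainComplex.next_nat_succ k
  rw [X.exactAt_iff' (m + 1) m (m - 1) (by simp [ChainComplex.prev]) hnext] at hE
  have hg : (X.sc' (m + 1) m (m - 1)).g = 0 := by
    cases m with
    | zero => exact X.shape 0 0 (by simp)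
    | succ k => exact (hm k (Nat.lt_succ_self k)).eq_of_tgt _ 0
  exact ((X.sc' (m + 1) m (m - 1)).exact_iff_epi hg).1 hE

/-- Objects of the complement complex `X'`. -/
noncomputable def auxObj (X : ChainComplex C ℕ) (m : ℕ) (K : C) : ℕ → C := fun n =>
  if n ≤ m then 0 else if n = m + 1 then K else X.X n

lemma auxObj_le (X : ChainComplex C ℕ) (m : ℕ) (K : C) {n : ℕ} (h : n ≤ m) :
    auxObj X m K n = 0 := by simp [auxObj, h]

lemma auxObj_succ (X : ChainComplex C ℕ) (m : ℕ) (K : C) :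
    auxObj X m K (m + 1) = K := by simp [auxObj]

lemma auxObj_ge (X : ChainComplex C ℕ) (m : ℕ) (K : C) {n : ℕ} (h : m + 2 ≤ n) :
    auxObj X m K n = X.X n := by
  simp only [auxObj]
  rw [if_neg (by omega), if_neg (by omega)]

/-- Differentials of the complement complex `X'`. -/
noncomputable def auxD (X : ChainComplex C ℕ) (m : ℕ) (K : C) (δ : X.X (m + 1 + 1) ⟶ K) :
    ∀ k : ℕ, auxObj X m K (k + 1) ⟶ auxObj X m K k := fun k =>
  if h1 : k ≤ m then 0
  else if h2 : k = m + 1 then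
    eqToHom (by rw [h2]; exact auxObj_ge X m K (by omega)) ≫ δ ≫
      eqToHom (by rw [h2, auxObj_succ])
  else
    eqToHom (auxObj_ge X m K (by omega)) ≫ X.d (k + 1) k ≫
      eqToHom (auxObj_ge X m K (by omega)).symm

/-- The complement complex `X'`. -/
noncomputable def auxComplex (X : ChainComplex C ℕ) (m : ℕ) (K : C) (δ : X.X (m + 1 + 1) ⟶ K)
    (hδ : X.d (m + 1 + 1 + 1) (m + 1 + 1) ≫ δ = 0) : ChainComplex C ℕ :=
  ChainComplex.of (auxObj X m K) (auxD X m K δ) (by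
    intro k
    show auxD X m K δ (k + 1) ≫ auxD X m K δ k = 0
    by_cases h1 : k ≤ m
    · simp only [auxD]
      rw [dif_pos h1, comp_zero]
    · by_cases h2 : k = m + 1
      · subst h2
        simp only [auxD]
        rw [dif_neg (by omega), dif_neg (by omega), dif_neg (by omega), dif_pos trivial]
        simp only [Category.assoc, eqToHom_trans_assoc, eqToHom_refl, Category.id_comp]
        rw [reassoc_of% hδ]
        simp
      · simp only [auxD]
        rw [dif_neg (by omega), dif_neg (by omega), dif_neg h1, dif_neg h2]
        simp)

lemma auxComplex_X (X : ChainComplex C ℕ) (m : ℕ) (K : C) (δ : X.X (m + 1 + 1) ⟶ K)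
    (hδ : X.d (m + 1 + 1 + 1) (m + 1 + 1) ≫ δ = 0) (n : ℕ) :
    (auxComplex X m K δ hδ).X n = auxObj X m K n := rfl

lemma auxComplex_d (X : ChainComplex C ℕ) (m : ℕ) (K : C) (δ : X.X (m + 1 + 1) ⟶ K)
    (hδ : X.d (m + 1 + 1 + 1) (m + 1 + 1) ≫ δ = 0) (j : ℕ) :
    (auxComplex X m K δ hδ).d (j + 1) j = auxD X m K δ j :=
  ChainComplex.of_d _ _ j

lemma disk_X_eq (n : ℕ) (A : C) (i : ℕ) : (disk n A).X i = diskObj n A i := rfl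

lemma disk_d_eq (n : ℕ) (A : C) (j : ℕ) : (disk n A).d (j + 1) j = diskD n A j :=
  ChainComplex.of_d _ _ j

/-- The splitting of a split epi with a chosen retraction of the kernel. -/
@[simps]
noncomputable def splitIso_s7 {P Q : C} (d : P ⟶ Q) (s : Q ⟶ P) (hs : s ≫ d = 𝟙 Q)
    (k : P ⟶ kernel d) (hk : k ≫ kernel.ι d = 𝟙 P - d ≫ s) : P ≅ Q ⊞ kernel d where
  hom := biprod.lift d k
  inv := biprod.desc s (kernel.ι d)
  hom_inv_id := by
    rw [biprod.lift_desc, hk]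
    abel
  inv_hom_id := by
    have hsk : s ≫ k = 0 := by
      rw [← cancel_mono (kernel.ι d), Category.assoc, hk]
      simp [Preadditive.comp_sub, reassoc_of% hs]
    have hik : kernel.ι d ≫ k = 𝟙 (kernel d) := by
      rw [← cancel_mono (kernel.ι d), Category.assoc, hk]
      simp [Preadditive.comp_sub, kernel.condition_assoc]
    apply biprod.hom_ext' <;> apply biprod.hom_ext <;>
      simp [hs, hsk, hik, kernel.condition]

end Helpers

/-- **Statement 8.** Let `C` be an abelian category satisfying the minimal cover axiom and
`X` a non-negative chain complex in `C` with `X n` projective for every `n`.  If `X i = 0`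
for all `i < m` and `H_m(X) = 0`, then `X ≅ D^{m+1}(X_m) ⊕ X'` for some chain complex `X'`
with projective degrees and `X' i = 0` for all `i ≤ m`. -/
theorem splitting_disk_of_isZero_homology
    (hC : HasMinimalCovers C)
    (X : ChainComplex C ℕ) (hcof : ∀ n : ℕ, Projective (X.X n))
    (m : ℕ) (hm : ∀ i : ℕ, i < m → IsZero (X.X i))
    (hH : IsZero (X.homology m)) :
    ∃ X' : ChainComplex C ℕ,
      (∀ n : ℕ, Projective (X'.X n)) ∧ (∀ i : ℕ, i ≤ m → IsZero (X'.X i)) ∧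
        Nonempty (X ≅ disk (m + 1) (X.X m) ⊞ X') := by
  classical
  have hEpi : Epi (X.d (m + 1) m) := epi_d_of_isZero_homology X m hm hH
  haveI : Projective (X.X m) := hcof m
  haveI : Projective (X.X (m + 1)) := hcof (m + 1)
  set A := X.X m with hA
  set dd := X.d (m + 1) m with hdd
  set s : A ⟶ X.X (m + 1) := Projective.factorThru (𝟙 A) dd with hsdef
  have hs : s ≫ dd = 𝟙 A := Projective.factorThru_comp _ _
  set K := kernel dd with hKdef
  set k0 : X.X (m + 1) ⟶ K := kernel.lift dd (𝟙 _ - dd ≫ s)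
    (by simp [Preadditive.sub_comp, Category.assoc, hs]; exact sub_eq_zero.mpr (Category.comp_id _).symm) with hk0def
  have hk0ι : k0 ≫ kernel.ι dd = 𝟙 _ - dd ≫ s := kernel.lift_ι _ _ _
  have hιk0 : kernel.ι dd ≫ k0 = 𝟙 K := by
    rw [← cancel_mono (kernel.ι dd), Category.assoc, hk0ι]
    simp [Preadditive.comp_sub, kernel.condition_assoc]
    exact (Category.id_comp _).symm
  set δ : X.X (m + 1 + 1) ⟶ K := kernel.lift dd (X.d (m + 1 + 1) (m + 1))
    (X.d_comp_d _ _ _) with hδdef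
  have hδι : δ ≫ kernel.ι dd = X.d (m + 1 + 1) (m + 1) := kernel.lift_ι _ _ _
  have hδ : X.d (m + 1 + 1 + 1) (m + 1 + 1) ≫ δ = 0 := by
    rw [← cancel_mono (kernel.ι dd), Category.assoc, hδι]
    simp
  have hXdk0 : X.d (m + 1 + 1) (m + 1) ≫ k0 = δ := by
    rw [← cancel_mono (kernel.ι dd), Category.assoc, hk0ι, hδι]
    rw [hdd]
    simp [Preadditive.comp_sub]
  set X' := auxComplex X m K δ hδ with hX'def
  set D := disk (m + 1) A with hDdef
  -- facts about X'
  have hX'zero : ∀ i : ℕ, i ≤ m → IsZero (X'.X i) := by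
    intro i hi
    rw [hX'def, auxComplex_X, auxObj_le X m K hi]
    exact isZero_zero C
  have hX'succ : X'.X (m + 1) = K := auxObj_succ X m K
  have hX'ge : ∀ n : ℕ, m + 2 ≤ n → X'.X n = X.X n := fun n hn => auxObj_ge X m K hn
  -- facts about D
  have hDm : D.X m = A := if_pos (Or.inr rfl)
  have hDm1 : D.X (m + 1) = A := if_pos (Or.inl rfl)
  have hDzero : ∀ n : ℕ, n ≠ m → n ≠ m + 1 → IsZero (D.X n) := by
    intro n h1 h2
    have : D.X n = 0 := if_neg (by omega)
    rw [this]
    exact isZero_zero C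
  have hDd : D.d (m + 1) m = eqToHom hDm1 ≫ eqToHom hDm.symm := by
    rw [show D.d (m + 1) m = diskD (m + 1) A m from disk_d_eq (m + 1) A m]
    simp only [diskD]
    rw [dif_pos trivial]
    rfl
  have hDd0 : ∀ j : ℕ, j ≠ m → D.d (j + 1) j = 0 := by
    intro j hj
    rw [show D.d (j + 1) j = diskD (m + 1) A j from disk_d_eq (m + 1) A j]
    simp only [diskD]
    rw [dif_neg (by omega)]
    rfl
  -- the components of the isomorphism
  set φ : ∀ n : ℕ, X.X n ≅ D.X n ⊞ X'.X n := fun n =>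
    if h1 : n < m then
      (hm n h1).iso (isZero_biprod (hDzero n (by omega) (by omega)) (hX'zero n (by omega)))
    else if h2 : n = m then
      eqToIso (by rw [h2]; exact hDm.symm) ≪≫ biprodIsoOfIsZeroRight (hX'zero n (by omega))
    else if h3 : n = m + 1 then
      eqToIso (by rw [h3]) ≪≫ splitIso_s7 dd s hs k0 hk0ι ≪≫
        biprod.mapIso (eqToIso (by rw [h3]; exact hDm1.symm))
          (eqToIso (by rw [h3]; exact hX'succ.symm))
    else
      eqToIso (by rw [hX'ge n (by omega)]) ≪≫
        biprodIsoOfIsZeroLeft (hDzero n (by omega) (by omega)) with hφdef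
  have key : ∀ j : ℕ, (φ (j + 1)).hom ≫ biprod.map (D.d (j + 1) j) (X'.d (j + 1) j) =
      X.d (j + 1) j ≫ (φ j).hom := by
    intro j
    by_cases hjA : j < m
    · exact (isZero_biprod (hDzero j (by omega) (by omega))
        (hX'zero j (by omega))).eq_of_tgt _ _
    by_cases hjB : j = m
    · subst hjB
      have hXd' : X'.d (j + 1) j = 0 := by
        rw [show X'.d (j + 1) j = auxD X j K δ j from auxComplex_d X j K δ hδ j]
        simp [auxD]
        rfl
      rw [hXd', hDd]
      simp only [hφdef]
      split_ifs <;> try (exfalso; omega)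
      apply biprod.hom_ext <;> simp [hdd]
    by_cases hjC : j = m + 1
    · subst hjC
      rw [show X'.d (m + 1 + 1) (m + 1) = auxD X m K δ (m + 1) from
        auxComplex_d X m K δ hδ (m + 1), hDd0 (m + 1) (by omega)]
      simp only [hφdef, auxD]
      split_ifs <;> try (exfalso; omega)
      apply biprod.hom_ext
      · simp [hdd]
        erw [biprod.map_fst]
        simp
      · simp [reassoc_of% hXdk0]
        erw [biprod.map_snd]
        erw [biprod.inr_snd_assoc, eqToHom_trans_assoc, eqToHom_refl, Category.id_comp]
        rfl
    · have hj4 : m + 2 ≤ j := by omega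
      rw [show X'.d (j + 1) j = auxD X m K δ j from auxComplex_d X m K δ hδ j,
        hDd0 j (by omega)]
      simp only [hφdef, auxD]
      split_ifs <;> try (exfalso; omega)
      apply biprod.hom_ext <;> simp
      erw [biprod.map_fst]
      simp
      erw [biprod.map_snd]
      erw [biprod.inr_snd_assoc, eqToHom_trans_assoc, eqToHom_refl, Category.id_comp]
      rfl
  refine ⟨X', ?_, hX'zero, ⟨HomologicalComplex.Hom.isoOfComponents
    (fun n => φ n ≪≫ (biprodXIso D X' n).symm) ?_⟩⟩
  · intro n
    by_cases h1 : n ≤ m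
    · exact projective_of_isZero (hX'zero n h1)
    by_cases h2 : n = m + 1
    · subst h2
      rw [show X'.X (m + 1) = K from hX'succ]
      exact projective_of_retract_s7 (kernel.ι dd) k0 hιk0
    · rw [hX'ge n (by omega)]
      exact hcof n
  · intro i j hij
    rw [ComplexShape.down_Rel] at hij
    subst hij
    have hsq := biprodXIso_d D X' (j + 1) j
    dsimp only [Iso.trans_hom, Iso.symm_hom]
    rw [show (D ⊞ X').d (j + 1) j =
        (biprodXIso D X' (j + 1)).hom ≫ biprod.map (D.d (j + 1) j) (X'.d (j + 1) j) ≫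
          (biprodXIso D X' j).inv from by
      rw [← Category.assoc, Iso.eq_comp_inv]
      exact hsq]
    simp only [Category.assoc, Iso.inv_hom_id_assoc]
    rw [reassoc_of% (key j)]
end
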